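/- Let U be an N×r complex matrix with orthonormal columns u₁, …, u_r (i.e., Uᴴ·U = I_r), let μ₁, …, μ_r be nonnegative reals, let P = U·diag(μ₁,…,μ_r)·Uᴴ, let ρ > 0, and let T be a subset of {1,…,r} of size M_p. Let S be the N×M_p matrix whose columns are √ρ·u_i for i ∈ T (each index used once). Then Sᴴ·P·S + I_{M_p} is invertible and P − P·S·(Sᴴ·P·S + I_{M_p})⁻¹·Sᴴ·P = U·diag(ν₁,…,ν_r)·Uᴴ, where ν_i = μ_i/(ρ·μ_i + 1) for i ∈ T and ν_i = μ_i for i ∉ T. In particular, the Kalman measurement update with training signals chosen among the eigenvectors of the channel covariance preserves the eigenbasis and decouples into scalar updates along the sounded directions. -/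

import Mathlib

open Matrix BigOperators

lemma aux_mid1 {r Mp : ℕ} (e : Fin Mp ↪ Fin r) (f : Fin r → ℂ) :
    (1 : Matrix (Fin r) (Fin r) ℂ).submatrix ⇑e id * diagonal f *
      (1 : Matrix (Fin r) (Fin r) ℂ).submatrix id ⇑e = diagonal (fun j => f (e j)) := by
  ext j k
  simp [Matrix.mul_apply, Matrix.diagonal_apply, Matrix.one_apply, Finset.sum_ite_eq,
    e.injective.eq_iff]
  split_ifs with h <;> simp [h]

lemma aux_mid2 {r Mp : ℕ} (e : Fin Mp ↪ Fin r) (f : Fin r → ℂ) :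
    (1 : Matrix (Fin r) (Fin r) ℂ).submatrix id ⇑e * diagonal (fun j => f (e j)) *
      (1 : Matrix (Fin r) (Fin r) ℂ).submatrix ⇑e id
    = diagonal (fun i => if i ∈ Set.range ⇑e then f i else 0) := by
  ext i i'
  simp only [Matrix.mul_apply, Matrix.submatrix_apply, Matrix.one_apply, Matrix.diagonal_apply,
    id_eq, ite_mul, one_mul, zero_mul, mul_ite, mul_one, mul_zero, Finset.sum_ite_eq,
    Finset.mem_univ, if_true]
  by_cases h : ∃ j, e j = i'
  · obtain ⟨j0, rfl⟩ := h
    simp only [e.injective.eq_iff, Finset.sum_ite_eq', Finset.mem_univ, if_true]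
    by_cases hi : i = e j0
    · subst hi; simp
    · simp [hi]
  · have h' : ∀ x, e x ≠ i' := by push_neg at h; exact h
    rw [Finset.sum_eq_zero (fun x _ => by simp [h' x])]
    by_cases hi : i = i'
    · subst hi
      have : i ∉ Set.range ⇑e := by simpa [Set.mem_range] using h
      simp [this]
    · simp [hi]

lemma aux_diag {r Mp : ℕ} (e : Fin Mp ↪ Fin r) (μ : Fin r → ℝ) (hμ : ∀ i, 0 ≤ μ i)
    (ρ : ℝ) (hρ : 0 < ρ) :
    Matrix.diagonal (fun i => (μ i : ℂ)) -
      (ρ : ℂ) • (Matrix.diagonal (fun i => (μ i : ℂ)) *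
        Matrix.diagonal (fun i => if i ∈ Set.range ⇑e then ((ρ : ℂ) * μ i + 1)⁻¹ else 0) *
        Matrix.diagonal (fun i => (μ i : ℂ))) =
    Matrix.diagonal (fun i =>
      if i ∈ Set.range e then ((μ i / (ρ * μ i + 1) : ℝ) : ℂ) else ((μ i : ℝ) : ℂ)) := by
  rw [Matrix.diagonal_mul_diagonal, Matrix.diagonal_mul_diagonal, ← Matrix.diagonal_smul,
    Matrix.diagonal_sub]
  refine congrArg Matrix.diagonal (funext fun i => ?_)
  simp only [Pi.sub_apply, Pi.smul_apply, smul_eq_mul]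
  by_cases hi : i ∈ Set.range ⇑e
  · have hne : (ρ : ℂ) * μ i + 1 ≠ 0 := by
      have h0 : (0:ℝ) < ρ * μ i + 1 := by nlinarith [mul_nonneg hρ.le (hμ i)]
      have : ((ρ * μ i + 1 : ℝ) : ℂ) ≠ 0 := Complex.ofReal_ne_zero.mpr h0.ne'
      simpa using this
    simp only [hi, if_true]
    rw [Complex.ofReal_div]
    push_cast
    linear_combination (-(μ i : ℂ)) * (mul_inv_cancel₀ hne)
  · simp [hi]

/-- Kalman measurement update with eigenvector training signals preserves the
eigenbasis and decouples into scalar updates along the sounded directions. -/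
theorem kalman_measurement_update_eigenbasis
    {N r Mp : ℕ}
    (U : Matrix (Fin N) (Fin r) ℂ) (hU : Uᴴ * U = 1)
    (μ : Fin r → ℝ) (hμ : ∀ i, 0 ≤ μ i)
    (ρ : ℝ) (hρ : 0 < ρ)
    (e : Fin Mp ↪ Fin r)
    (P : Matrix (Fin N) (Fin N) ℂ)
    (hP : P = U * Matrix.diagonal (fun i => (μ i : ℂ)) * Uᴴ)
    (S : Matrix (Fin N) (Fin Mp) ℂ)
    (hS : S = Matrix.of fun i j => (Real.sqrt ρ : ℂ) * U i (e j)) :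
    IsUnit (Sᴴ * P * S + 1) ∧
    P - P * S * (Sᴴ * P * S + 1)⁻¹ * Sᴴ * P =
      U * Matrix.diagonal (fun i =>
        if i ∈ Set.range e then ((μ i / (ρ * μ i + 1) : ℝ) : ℂ) else ((μ i : ℝ) : ℂ)) * Uᴴ := by
  -- notation
  set D : Matrix (Fin r) (Fin r) ℂ := Matrix.diagonal (fun i => (μ i : ℂ)) with hD
  set V : Matrix (Fin N) (Fin Mp) ℂ := U.submatrix id ⇑e with hVdef
  set E₁ : Matrix (Fin r) (Fin Mp) ℂ := (1 : Matrix (Fin r) (Fin r) ℂ).submatrix id ⇑e with hE₁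
  set E₂ : Matrix (Fin Mp) (Fin r) ℂ := (1 : Matrix (Fin r) (Fin r) ℂ).submatrix ⇑e id with hE₂
  have hSV : S = (Real.sqrt ρ : ℂ) • V := by
    rw [hS]; ext i j; simp [hVdef, Matrix.submatrix_apply]
  have hconj : Sᴴ = (Real.sqrt ρ : ℂ) • Vᴴ := by
    rw [hSV, conjTranspose_smul]
    congr 1
    simp [Complex.star_def, Complex.conj_ofReal]
  have hρρ : (Real.sqrt ρ : ℂ) * (Real.sqrt ρ : ℂ) = (ρ : ℂ) := by
    rw [← Complex.ofReal_mul, Real.mul_self_sqrt hρ.le]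
  have hUV : Uᴴ * V = E₁ := by
    rw [hVdef, hE₁, ← hU]
    simpa using Matrix.submatrix_mul_equiv Uᴴ U id (Equiv.refl (Fin N)) ⇑e
  have hVU : Vᴴ * U = E₂ := by
    rw [hVdef, hE₂, conjTranspose_submatrix, ← hU]
    simpa using Matrix.submatrix_mul_equiv Uᴴ U ⇑e (Equiv.refl (Fin N)) id
  have hUV' : ∀ {k : ℕ} (B : Matrix (Fin Mp) (Fin k) ℂ), Uᴴ * (V * B) = E₁ * B := by
    intro k B; rw [← Matrix.mul_assoc, hUV]
  have hVU' : ∀ {k : ℕ} (B : Matrix (Fin r) (Fin k) ℂ), Vᴴ * (U * B) = E₂ * B := by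
    intro k B; rw [← Matrix.mul_assoc, hVU]
  -- the measurement Gramian
  have hA : Sᴴ * P * S + 1 = diagonal (fun j => (ρ : ℂ) * μ (e j) + 1) := by
    rw [hP, hconj, hSV]
    simp only [Matrix.smul_mul, Matrix.mul_smul, smul_smul]
    rw [hρρ]
    have hcore : Vᴴ * (U * D * Uᴴ) * V = diagonal (fun j => (μ (e j) : ℂ)) := by
      calc Vᴴ * (U * D * Uᴴ) * V = Vᴴ * U * D * (Uᴴ * V) := by
            simp only [Matrix.mul_assoc]
        _ = E₂ * D * E₁ := by rw [hVU, hUV]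
        _ = _ := aux_mid1 e _
    rw [hcore, ← Matrix.diagonal_one, ← Matrix.diagonal_smul, Matrix.diagonal_add]
    exact congrArg Matrix.diagonal (funext fun j => by simp)
  have hcne : ∀ j : Fin Mp, (ρ : ℂ) * μ (e j) + 1 ≠ 0 := by
    intro j
    have h0 : (0:ℝ) < ρ * μ (e j) + 1 := by nlinarith [mul_nonneg hρ.le (hμ (e j))]
    have : ((ρ * μ (e j) + 1 : ℝ) : ℂ) ≠ 0 := by
      exact_mod_cast Complex.ofReal_ne_zero.mpr h0.ne'
    simpa using this
  have hUnit : IsUnit (Sᴴ * P * S + 1) := by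
    rw [hA, Matrix.isUnit_iff_isUnit_det, Matrix.det_diagonal, isUnit_iff_ne_zero]
    exact Finset.prod_ne_zero_iff.mpr fun j _ => hcne j
  refine ⟨hUnit, ?_⟩
  have hinv : (Sᴴ * P * S + 1)⁻¹ = diagonal (fun j => ((ρ : ℂ) * μ (e j) + 1)⁻¹) := by
    rw [hA]
    refine Matrix.inv_eq_right_inv ?_
    rw [Matrix.diagonal_mul_diagonal]
    have hfun : (fun i => ((ρ : ℂ) * μ (e i) + 1) * ((ρ : ℂ) * μ (e i) + 1)⁻¹)
        = fun _ => (1 : ℂ) := funext fun j => mul_inv_cancel₀ (hcne j)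
    rw [hfun, Matrix.diagonal_one]
  -- the correction term
  set g : Fin r → ℂ := fun i => if i ∈ Set.range ⇑e then ((ρ : ℂ) * μ i + 1)⁻¹ else 0 with hg
  have hmid : E₁ * diagonal (fun j => ((ρ : ℂ) * μ (e j) + 1)⁻¹) * E₂ = diagonal g :=
    aux_mid2 e (fun i => ((ρ : ℂ) * μ i + 1)⁻¹)
  have hterm : P * S * (Sᴴ * P * S + 1)⁻¹ * Sᴴ * P
      = (ρ : ℂ) • (U * (D * diagonal g * D) * Uᴴ) := by
    rw [hinv, hconj, hSV, hP]
    simp only [Matrix.mul_smul, Matrix.smul_mul, smul_smul]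
    rw [hρρ]
    congr 1
    calc U * D * Uᴴ * V * diagonal (fun j => ((ρ : ℂ) * μ (e j) + 1)⁻¹) * Vᴴ * (U * D * Uᴴ)
        = U * (D * ((Uᴴ * V) * diagonal (fun j => ((ρ : ℂ) * μ (e j) + 1)⁻¹) * ((Vᴴ * U) * (D * Uᴴ)))) := by
          simp only [Matrix.mul_assoc]
      _ = U * (D * (E₁ * diagonal (fun j => ((ρ : ℂ) * μ (e j) + 1)⁻¹) * (E₂ * (D * Uᴴ)))) := by
          rw [hUV, hVU]
      _ = U * (D * diagonal g * D) * Uᴴ := by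
          rw [← hmid]; simp only [Matrix.mul_assoc]
  rw [hterm, hP]
  have hOuter : U * D * Uᴴ - (ρ : ℂ) • (U * (D * diagonal g * D) * Uᴴ)
      = U * (D - (ρ : ℂ) • (D * diagonal g * D)) * Uᴴ := by
    rw [Matrix.mul_sub, Matrix.sub_mul, Matrix.mul_smul, Matrix.smul_mul]
  rw [hOuter]
  have hdiag : D - (ρ : ℂ) • (D * diagonal g * D) =
      Matrix.diagonal (fun i =>
        if i ∈ Set.range e then ((μ i / (ρ * μ i + 1) : ℝ) : ℂ) else ((μ i : ℝ) : ℂ)) := by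
    rw [hD, hg]
    exact aux_diag e μ hμ ρ hρ
  rw [hdiag]
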